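/- arXiv:1310.3195 — 2 statements merged into one kernel-verified Lean document; each statement's English description precedes it below -/
import Mathlib

section
/- Let F be a fragment and ⟨u,α⟩, ⟨v,β⟩ V-valuations such that Duplicator has a winning strategy in the configuration (F, ⟨u,α⟩, ⟨v,β⟩). Let Q ∈ {∃,∀,¬∃,¬∀} and x a variable with x ∉ V such that the reduct Qx⁻¹F is nonempty. Then: (1) if Q ∈ {∃,∀}, Duplicator has a winning strategy in the configuration (Qx⁻¹F, ⟨u,α⟩, ⟨v,β⟩); (2) if Q ∈ {¬∃,¬∀}, Duplicator has a winning strategy in the configuration (Qx⁻¹F, ⟨v,β⟩, ⟨u,α⟩). -/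
set_option autoImplicit false

instance instCountableLex {α : Type*} [Countable α] : Countable (Lex α) :=
  inferInstanceAs (Countable α)

namespace EFGames

/-! ### Syntax of first-order logic over words.
Letters of the alphabet `Λ` and first-order variables are represented by natural numbers. -/

inductive FOForm : Type where
  | top | bot | empt
  | eq (x y : ℕ) | lab (x a : ℕ)
  | lt (x y : ℕ) | le (x y : ℕ) | suc (x y : ℕ)
  | fmin (x : ℕ) | fmax (x : ℕ)
  | not (φ : FOForm) | or (φ ψ : FOForm) | and (φ ψ : FOForm)
  | ex (x : ℕ) (φ : FOForm) | all (x : ℕ) (φ : FOForm)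

/-- Free variables of a formula. -/
def FOForm.FV : FOForm → Finset ℕ
  | .top | .bot | .empt => ∅
  | .eq x y | .lt x y | .le x y | .suc x y => {x, y}
  | .lab x _ | .fmin x | .fmax x => {x}
  | .not φ => φ.FV
  | .or φ ψ | .and φ ψ => φ.FV ∪ ψ.FV
  | .ex x φ | .all x φ => φ.FV.erase x

/-- Quantifier depth. -/
def FOForm.qd : FOForm → ℕ
  | .not φ => φ.qd
  | .or φ ψ | .and φ ψ => max φ.qd ψ.qd
  | .ex _ φ | .all _ φ => φ.qd + 1
  | _ => 0

/-- All variables occurring in a formula (free or bound). -/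
def FOForm.vars : FOForm → Finset ℕ
  | .top | .bot | .empt => ∅
  | .eq x y | .lt x y | .le x y | .suc x y => {x, y}
  | .lab x _ | .fmin x | .fmax x => {x}
  | .not φ => φ.vars
  | .or φ ψ | .and φ ψ => φ.vars ∪ ψ.vars
  | .ex x φ | .all x φ => insert x φ.vars

/-- The formula contains none of the predicates `suc`, `min`, `max`, `empty`. -/
def FOForm.NoSMME : FOForm → Prop
  | .empt | .suc _ _ | .fmin _ | .fmax _ => False
  | .not φ => φ.NoSMME
  | .or φ ψ | .and φ ψ => φ.NoSMME ∧ ψ.NoSMME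
  | .ex _ φ | .all _ φ => φ.NoSMME
  | _ => True

/-- The formula contains the predicate `≤` or `<`. -/
def FOForm.HasOrder : FOForm → Prop
  | .lt _ _ | .le _ _ => True
  | .not φ => φ.HasOrder
  | .or φ ψ | .and φ ψ => φ.HasOrder ∨ ψ.HasOrder
  | .ex _ φ | .all _ φ => φ.HasOrder
  | _ => False

/-- The formula contains one of the predicates `suc`, `min`, `max`, `empty`. -/
def FOForm.HasSMME : FOForm → Prop
  | .empt | .suc _ _ | .fmin _ | .fmax _ => True
  | .not φ => φ.HasSMME
  | .or φ ψ | .and φ ψ => φ.HasSMME ∨ ψ.HasSMME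
  | .ex _ φ | .all _ φ => φ.HasSMME
  | _ => False

def FOForm.IsAtomic : FOForm → Prop
  | .top | .bot | .empt | .eq _ _ | .lab _ _ | .lt _ _ | .le _ _
  | .suc _ _ | .fmin _ | .fmax _ => True
  | _ => False

/-- A literal is an atomic formula or a negated atomic formula. -/
def FOForm.IsLiteral (φ : FOForm) : Prop :=
  φ.IsAtomic ∨ ∃ ψ : FOForm, ψ.IsAtomic ∧ φ = .not ψ

/-- A sentence is a formula without free variables. -/
def FOForm.IsSentence (φ : FOForm) : Prop := φ.FV = ∅

/-- Contexts: formulas with exactly one occurrence of a placeholder `∘`. -/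
inductive FOCtx : Type where
  | hole
  | notC (μ : FOCtx)
  | orL (μ : FOCtx) (ψ : FOForm)
  | orR (φ : FOForm) (μ : FOCtx)
  | andL (μ : FOCtx) (ψ : FOForm)
  | andR (φ : FOForm) (μ : FOCtx)
  | exC (x : ℕ) (μ : FOCtx)
  | allC (x : ℕ) (μ : FOCtx)

/-- Substituting a formula for the placeholder of a context. -/
def FOCtx.subst : FOCtx → FOForm → FOForm
  | .hole, φ => φ
  | .notC μ, φ => .not (μ.subst φ)
  | .orL μ ψ, φ => .or (μ.subst φ) ψ
  | .orR χ μ, φ => .or χ (μ.subst φ)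
  | .andL μ ψ, φ => .and (μ.subst φ) ψ
  | .andR χ μ, φ => .and χ (μ.subst φ)
  | .exC x μ, φ => .ex x (μ.subst φ)
  | .allC x μ, φ => .all x (μ.subst φ)

/-- A fragment: a nonempty set of formulas satisfying the syntactic closure properties. -/
structure IsFragment (F : Set FOForm) : Prop where
  nonempty : F.Nonempty
  top_mem : ∀ (μ : FOCtx) (φ : FOForm), μ.subst φ ∈ F → μ.subst .top ∈ F
  bot_mem : ∀ (μ : FOCtx) (φ : FOForm), μ.subst φ ∈ F → μ.subst .bot ∈ F
  lab_mem : ∀ (μ : FOCtx) (φ : FOForm) (x a : ℕ), μ.subst φ ∈ F → μ.subst (.lab x a) ∈ F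
  or_mem : ∀ (μ : FOCtx) (φ ψ : FOForm),
    μ.subst (.or φ ψ) ∈ F ↔ μ.subst φ ∈ F ∧ μ.subst ψ ∈ F
  and_mem : ∀ (μ : FOCtx) (φ ψ : FOForm),
    μ.subst (.and φ ψ) ∈ F ↔ μ.subst φ ∈ F ∧ μ.subst ψ ∈ F
  negneg : ∀ (μ : FOCtx) (φ : FOForm), μ.subst (.not (.not φ)) ∈ F → μ.subst φ ∈ F
  ex_drop : ∀ (μ : FOCtx) (φ : FOForm) (x : ℕ),
    μ.subst (.ex x φ) ∈ F → x ∉ φ.FV → μ.subst φ ∈ F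
  all_drop : ∀ (μ : FOCtx) (φ : FOForm) (x : ℕ),
    μ.subst (.all x φ) ∈ F → x ∉ φ.FV → μ.subst φ ∈ F

/-- A fragment is order-stable if `μ(x<y) ∈ F ↔ μ(x≤y) ∈ F`. -/
def OrderStable (F : Set FOForm) : Prop :=
  ∀ (μ : FOCtx) (x y : ℕ), μ.subst (.lt x y) ∈ F ↔ μ.subst (.le x y) ∈ F

/-- A fragment is suc-stable if it satisfies the two closure conditions for `suc`, `min`, `max`, `empty`. -/
def SucStable (F : Set FOForm) : Prop :=
  (∀ (μ : FOCtx) (x y : ℕ), μ.subst (.suc x y) ∈ F →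
      μ.subst (.eq x y) ∈ F ∧ μ.subst (.fmax x) ∈ F ∧ μ.subst (.fmin y) ∈ F) ∧
  (∀ (μ : FOCtx) (x : ℕ), (μ.subst (.fmin x) ∈ F ∨ μ.subst (.fmax x) ∈ F) →
      μ.subst .empt ∈ F)

/-- The fragment has quantifier depth bounded by `n`. -/
def QDBoundedBy (F : Set FOForm) (n : ℕ) : Prop := ∀ φ ∈ F, φ.qd ≤ n

/-- Quantifiers, including the negated quantifiers. -/
inductive Quant : Type | qex | qall | qnex | qnall

def Quant.apply : Quant → ℕ → FOForm → FOForm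
  | .qex, x, φ => .ex x φ
  | .qall, x, φ => .all x φ
  | .qnex, x, φ => .not (.ex x φ)
  | .qnall, x, φ => .not (.all x φ)

/-- The reduct `Qx⁻¹F` of a set of formulas. -/
def reduct (Q : Quant) (x : ℕ) (F : Set FOForm) : Set FOForm := {φ | Q.apply x φ ∈ F}
/-! ### Generalized words -/

/-- A (countable) generalized word over the alphabet `ℕ`: a countable linear order
labeled by letters. Words are compared up to label-preserving order isomorphism
(`GWord.Iso`). -/
structure GWord : Type 1 where
  carrier : Type
  ord : LinearOrder carrier
  cnt : Countable carrier
  label : carrier → ℕ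

attribute [instance] GWord.ord GWord.cnt

/-- Label-preserving order isomorphism of generalized words. -/
def GWord.Iso (u v : GWord) : Prop :=
  ∃ f : u.carrier ≃o v.carrier, ∀ p : u.carrier, v.label (f p) = u.label p

/-- Satisfaction of a formula in a word under a (partial) valuation of the variables. -/
def GWord.Sat (u : GWord) : (ℕ → Option u.carrier) → FOForm → Prop
  | _, .top => True
  | _, .bot => False
  | _, .empt => IsEmpty u.carrier
  | α, .eq x y => ∃ p q : u.carrier, α x = some p ∧ α y = some q ∧ p = q
  | α, .lab x a => ∃ p : u.carrier, α x = some p ∧ u.label p = a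
  | α, .lt x y => ∃ p q : u.carrier, α x = some p ∧ α y = some q ∧ p < q
  | α, .le x y => ∃ p q : u.carrier, α x = some p ∧ α y = some q ∧ p ≤ q
  | α, .suc x y => ∃ p q : u.carrier, α x = some p ∧ α y = some q ∧ p < q ∧
      ∀ r : u.carrier, ¬ (p < r ∧ r < q)
  | α, .fmin x => ∃ p : u.carrier, α x = some p ∧ ∀ q : u.carrier, p ≤ q
  | α, .fmax x => ∃ p : u.carrier, α x = some p ∧ ∀ q : u.carrier, q ≤ p
  | α, .not φ => ¬ u.Sat α φ
  | α, .or φ ψ => u.Sat α φ ∨ u.Sat α ψ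
  | α, .and φ ψ => u.Sat α φ ∧ u.Sat α ψ
  | α, .ex x φ => ∃ p : u.carrier, u.Sat (fun y => if y = x then some p else α y) φ
  | α, .all x φ => ∀ p : u.carrier, u.Sat (fun y => if y = x then some p else α y) φ

/-- The empty valuation. -/
def emptyVal (u : GWord) : ℕ → Option u.carrier := fun _ => none

/-- A word satisfies a sentence. -/
def SatS (u : GWord) (φ : FOForm) : Prop := u.Sat (emptyVal u) φ

/-- Updating a valuation at a variable. -/
def updVal {u : GWord} (α : ℕ → Option u.carrier) (x : ℕ) (p : u.carrier) :
    ℕ → Option u.carrier :=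
  fun y => if y = x then some p else α y

/-- The domain of the valuation `α` is exactly the finite set `V`. -/
def ValDom {u : GWord} (α : ℕ → Option u.carrier) (V : Finset ℕ) : Prop :=
  ∀ x : ℕ, (α x).isSome ↔ x ∈ V

/-- A finite word, regarded as a generalized word. -/
def listToGWord (w : List ℕ) : GWord :=
  ⟨Fin w.length, inferInstance, inferInstance, w.get⟩

/-- Concatenation of generalized words. -/
def GWord.concat (u v : GWord) : GWord :=
  ⟨u.carrier ⊕ₗ v.carrier, inferInstance, inferInstance,
    fun p => Sum.elim u.label v.label (ofLex p)⟩

/-- The `τ`-power of a word, where `τ` is the order type of the countable linear order `T`: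
positions are pairs `(t, p)` ordered with the `T`-component dominant. -/
def GWord.pow (u : GWord) (T : Type) [LinearOrder T] [Countable T] : GWord :=
  ⟨T ×ₗ u.carrier, inferInstance, inferInstance, fun p => u.label (ofLex p).2⟩

/-- An index type of order type `ρ = ω + ζ·η + ω*`: a copy of `ℕ`, followed by `ℤ × ℚ`
ordered lexicographically with the `ℚ`-component dominant, followed by the negative
integers (the order dual of `ℕ`). -/
abbrev Rho : Type := (ℕ ⊕ₗ (ℚ ×ₗ ℤ)) ⊕ₗ ℕᵒᵈ

/-- ρ-rational words: built from finite words by concatenation and ρ-power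
(closed under isomorphism, since words are identified up to isomorphism). -/
inductive RhoRational : GWord → Prop where
  | fin (w : List ℕ) : RhoRational (listToGWord w)
  | concat {u v : GWord} : RhoRational u → RhoRational v → RhoRational (u.concat v)
  | rpow {u : GWord} : RhoRational u → RhoRational (u.pow Rho)
  | iso {u v : GWord} : RhoRational u → GWord.Iso u v → RhoRational v
/-! ### The `F`-game -/

/-- A configuration of the `F`-game: a set of formulas (an iterated reduct of the
original fragment) together with two valuations on two words. -/
structure Config : Type 1 where
  frag : Set FOForm
  w1 : GWord
  w2 : GWord
  val1 : ℕ → Option w1.carrier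
  val2 : ℕ → Option w2.carrier

/-- Spoiler's winning condition: the configuration contains a literal with free variables
inside the valuation domain, satisfied in the first valuation but not in the second. -/
def SpoilerWinsNow (C : Config) : Prop :=
  ∃ φ ∈ C.frag, φ.IsLiteral ∧ (∀ y ∈ φ.FV, (C.val1 y).isSome) ∧
    C.w1.Sat C.val1 φ ∧ ¬ C.w2.Sat C.val2 φ

/-- A set of configurations is a (Duplicator-)safe invariant: no configuration in it is
immediately winning for Spoiler, and for every move of Spoiler (a quantifier `Q`, a
variable `x` with nonempty reduct, and a quest `q` in the appropriate word) Duplicator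
has a reply `r` leading back into the set (the valuations are swapped for negated
quantifiers). -/
def SafeInv (Good : Set Config) : Prop :=
  ∀ D ∈ Good,
    (¬ SpoilerWinsNow D) ∧
    (∀ x : ℕ, (reduct .qex x D.frag).Nonempty →
      ∀ q : D.w1.carrier, ∃ r : D.w2.carrier,
        (⟨reduct .qex x D.frag, D.w1, D.w2, updVal D.val1 x q, updVal D.val2 x r⟩ : Config) ∈ Good) ∧
    (∀ x : ℕ, (reduct .qall x D.frag).Nonempty →
      ∀ q : D.w2.carrier, ∃ r : D.w1.carrier,
        (⟨reduct .qall x D.frag, D.w1, D.w2, updVal D.val1 x r, updVal D.val2 x q⟩ : Config) ∈ Good) ∧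
    (∀ x : ℕ, (reduct .qnex x D.frag).Nonempty →
      ∀ q : D.w2.carrier, ∃ r : D.w1.carrier,
        (⟨reduct .qnex x D.frag, D.w2, D.w1, updVal D.val2 x q, updVal D.val1 x r⟩ : Config) ∈ Good) ∧
    (∀ x : ℕ, (reduct .qnall x D.frag).Nonempty →
      ∀ q : D.w1.carrier, ∃ r : D.w2.carrier,
        (⟨reduct .qnall x D.frag, D.w2, D.w1, updVal D.val2 x r, updVal D.val1 x q⟩ : Config) ∈ Good)

/-- Duplicator has a winning strategy from a configuration of this (possibly infinite)
safety game iff some safe invariant contains the configuration. -/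
def DuplicatorWins (C : Config) : Prop :=
  ∃ Good : Set Config, C ∈ Good ∧ SafeInv Good

/-- Duplicator has a winning strategy in the `F`-game on `(u, v)` (from the initial
configuration with empty valuations). -/
def DuplicatorWinsGame (F : Set FOForm) (u v : GWord) : Prop :=
  DuplicatorWins ⟨F, u, v, fun _ => none, fun _ => none⟩

/-- Spoiler has a winning strategy: either the current configuration is already winning
for Spoiler, or Spoiler has a move such that every reply of Duplicator (in particular,
no possible reply) leads to a configuration where Spoiler wins. -/
inductive SpoilerWins : Config → Prop where
  | now {C : Config} : SpoilerWinsNow C → SpoilerWins C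
  | mex {C : Config} (x : ℕ) (h : (reduct .qex x C.frag).Nonempty) (q : C.w1.carrier)
      (h2 : ∀ r : C.w2.carrier, SpoilerWins
        ⟨reduct .qex x C.frag, C.w1, C.w2, updVal C.val1 x q, updVal C.val2 x r⟩) :
      SpoilerWins C

/-! ### π-terms and their interpretations -/

/-- π-terms over the alphabet `ℕ` (elements of the free π-algebra). -/
inductive PiTerm : Type where
  | letter (a : ℕ)
  | mul (s t : PiTerm)
  | pi (s : PiTerm)

/-- The interpretation `⟦·⟧_ρ` of π-terms as generalized words: letters become
single-position words, products concatenations, and the π-power the ρ-power. -/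
def PiTerm.evalRho : PiTerm → GWord
  | .letter a => listToGWord [a]
  | .mul s t => s.evalRho.concat t.evalRho
  | .pi s => s.evalRho.pow Rho

/-- The interpretation `⟦·⟧_m` of π-terms as finite words: the π-power becomes
the `m`-fold concatenation power. -/
def PiTerm.evalFin (m : ℕ) : PiTerm → GWord
  | .letter a => listToGWord [a]
  | .mul s t => (s.evalFin m).concat (t.evalFin m)
  | .pi s => (s.evalFin m).pow (Fin m)

/-- `mpow u k = u^(k+1)`: positive powers in any semigroup (or magma). -/
def mpow {M : Type} [Mul M] (u : M) : ℕ → M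
  | 0 => u
  | k+1 => mpow u k * u

/-- `k+1` is an idempotency exponent of `M`: `u^(k+1)` is idempotent for every `u`. -/
def IsIdemExpnt (M : Type) [Mul M] (k : ℕ) : Prop :=
  ∀ u : M, mpow u k * mpow u k = mpow u k

/-- Evaluation of a π-term in `M` under a letter assignment `h`, interpreting the
π-power as the `(k+1)`-st power. -/
def PiTerm.evalMul {M : Type} [Mul M] (h : ℕ → M) (k : ℕ) : PiTerm → M
  | .letter a => h a
  | .mul s t => (s.evalMul h k) * (t.evalMul h k)
  | .pi s => mpow (s.evalMul h k) k

/-- The identity `s = t` of π-terms holds in `M`: for every assignment of the letters and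
every idempotency exponent (i.e. interpreting `(·)^π` as the idempotent power), the two
terms evaluate equally. -/
def PiIdentityHolds (M : Type) [Mul M] (s t : PiTerm) : Prop :=
  ∀ (h : ℕ → M) (k : ℕ), IsIdemExpnt M k → s.evalMul h k = t.evalMul h k

/-! ### Languages, definability and syntactic monoids/semigroups -/

/-- All letters of the finite word `w` belong to the alphabet `A`. -/
def InAlph (A : Finset ℕ) (w : FreeMonoid ℕ) : Prop :=
  ∀ a ∈ FreeMonoid.toList w, a ∈ A

/-- A finite word, regarded as a generalized word. -/
def wordToGWord (w : FreeMonoid ℕ) : GWord := listToGWord (FreeMonoid.toList w)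

/-- The submonoid `A* ⊆ Λ*` of words over the finite alphabet `A`. -/
def wordsOver (A : Finset ℕ) : Submonoid (FreeMonoid ℕ) where
  carrier := {w | InAlph A w}
  mul_mem' := by
    intro u v hu hv a ha
    rw [FreeMonoid.toList_mul] at ha
    rcases List.mem_append.mp ha with h | h
    exacts [hu a h, hv a h]
  one_mem' := by
    intro a ha
    simp [FreeMonoid.toList_one] at ha

/-- The single-letter word `a ∈ A*`. -/
def letterWord (A : Finset ℕ) (a : ℕ) (ha : a ∈ A) : ↥(wordsOver A) :=
  ⟨FreeMonoid.of a, by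
    intro b hb
    rw [FreeMonoid.toList_of] at hb
    rcases List.mem_singleton.mp hb with rfl
    exact ha⟩

/-- The language over `A` defined by the sentence `φ`. -/
def LangOf (A : Finset ℕ) (φ : FOForm) : Set (FreeMonoid ℕ) :=
  {w | InAlph A w ∧ SatS (wordToGWord w) φ}

/-- `L ⊆ A*` is definable in `F` over the alphabet `A`. -/
def DefinableIn (F : Set FOForm) (A : Finset ℕ) (L : Set (FreeMonoid ℕ)) : Prop :=
  ∃ φ ∈ F, φ.IsSentence ∧ L = LangOf A φ

/-- The syntactic congruence of `L` on `A*`: `u ≡_L v` iff `xuy ∈ L ⇔ xvy ∈ L` for all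
contexts `x, y ∈ A*`. -/
def synCon (A : Finset ℕ) (L : Set (FreeMonoid ℕ)) : Con ↥(wordsOver A) where
  r u v := ∀ x y : FreeMonoid ℕ, InAlph A x → InAlph A y →
    ((x * ↑u * y ∈ L) ↔ (x * ↑v * y ∈ L))
  iseqv := ⟨fun _ _ _ _ _ => Iff.rfl,
    fun h x y hx hy => (h x y hx hy).symm,
    fun h1 h2 x y hx hy => (h1 x y hx hy).trans (h2 x y hx hy)⟩
  mul' := by
    intro w x y z h1 h2 a b ha hb
    have hyb : InAlph A ((y : FreeMonoid ℕ) * b) := by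
      intro c hc
      rw [FreeMonoid.toList_mul] at hc
      rcases List.mem_append.mp hc with h | h
      exacts [y.2 c h, hb c h]
    have hax : InAlph A (a * (x : FreeMonoid ℕ)) := by
      intro c hc
      rw [FreeMonoid.toList_mul] at hc
      rcases List.mem_append.mp hc with h | h
      exacts [ha c h, x.2 c h]
    have e1 : a * ↑(w * y) * b = a * (w : FreeMonoid ℕ) * (↑y * b) := by
      push_cast; simp [mul_assoc]
    have e2 : a * (x : FreeMonoid ℕ) * (↑y * b) = (a * ↑x) * ↑y * b := by
      simp [mul_assoc]
    have e3 : (a * (x : FreeMonoid ℕ)) * ↑z * b = a * ↑(x * z) * b := by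
      push_cast; simp [mul_assoc]
    rw [e1, h1 a (↑y * b) ha hyb, e2, h2 (a * ↑x) b hax hb, e3]

/-- The syntactic monoid `M_L = A*/≡_L`. -/
def SynMonoid (A : Finset ℕ) (L : Set (FreeMonoid ℕ)) : Type := (synCon A L).Quotient

instance (A : Finset ℕ) (L : Set (FreeMonoid ℕ)) : Monoid (SynMonoid A L) :=
  inferInstanceAs (Monoid (synCon A L).Quotient)

/-- The subsemigroup `A⁺ ⊆ Λ*` of nonempty words over the finite alphabet `A`. -/
def plusWordsOver (A : Finset ℕ) : Subsemigroup (FreeMonoid ℕ) where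
  carrier := {w | w ≠ 1 ∧ InAlph A w}
  mul_mem' := by
    intro u v hu hv
    refine ⟨?_, ?_⟩
    · intro h
      apply hu.1
      have : FreeMonoid.toList (u * v) = FreeMonoid.toList (1 : FreeMonoid ℕ) := by rw [h]
      rw [FreeMonoid.toList_mul, FreeMonoid.toList_one] at this
      exact (List.append_eq_nil_iff.mp this).1
    · intro a ha
      rw [FreeMonoid.toList_mul] at ha
      rcases List.mem_append.mp ha with h | h
      exacts [hu.2 a h, hv.2 a h]

/-- The syntactic congruence of `L ⊆ A⁺` on `A⁺` (contexts range over `A*`). -/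
def synConS (A : Finset ℕ) (L : Set (FreeMonoid ℕ)) : Con ↥(plusWordsOver A) where
  r u v := ∀ x y : FreeMonoid ℕ, InAlph A x → InAlph A y →
    ((x * ↑u * y ∈ L) ↔ (x * ↑v * y ∈ L))
  iseqv := ⟨fun _ _ _ _ _ => Iff.rfl,
    fun h x y hx hy => (h x y hx hy).symm,
    fun h1 h2 x y hx hy => (h1 x y hx hy).trans (h2 x y hx hy)⟩
  mul' := by
    intro w x y z h1 h2 a b ha hb
    have hyb : InAlph A ((y : FreeMonoid ℕ) * b) := by
      intro c hc
      rw [FreeMonoid.toList_mul] at hc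
      rcases List.mem_append.mp hc with h | h
      exacts [y.2.2 c h, hb c h]
    have hax : InAlph A (a * (x : FreeMonoid ℕ)) := by
      intro c hc
      rw [FreeMonoid.toList_mul] at hc
      rcases List.mem_append.mp hc with h | h
      exacts [ha c h, x.2.2 c h]
    have e1 : a * ↑(w * y) * b = a * (w : FreeMonoid ℕ) * (↑y * b) := by
      push_cast; simp [mul_assoc]
    have e2 : a * (x : FreeMonoid ℕ) * (↑y * b) = (a * ↑x) * ↑y * b := by
      simp [mul_assoc]
    have e3 : (a * (x : FreeMonoid ℕ)) * ↑z * b = a * ↑(x * z) * b := by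
      push_cast; simp [mul_assoc]
    rw [e1, h1 a (↑y * b) ha hyb, e2, h2 (a * ↑x) b hax hb, e3]

/-- The syntactic semigroup of `L ⊆ A⁺`. -/
def SynSemigroup (A : Finset ℕ) (L : Set (FreeMonoid ℕ)) : Type := (synConS A L).Quotient

instance (A : Finset ℕ) (L : Set (FreeMonoid ℕ)) : Semigroup (SynSemigroup A L) :=
  inferInstanceAs (Semigroup (synConS A L).Quotient)

/-- The language of nonempty words over `A` defined by the sentence `φ`. -/
def LangOfPlus (A : Finset ℕ) (φ : FOForm) : Set (FreeMonoid ℕ) :=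
  {w | w ≠ 1 ∧ InAlph A w ∧ SatS (wordToGWord w) φ}

/-- `L ⊆ A⁺` is definable in `F` over the alphabet `A`, over nonempty words. -/
def DefinablePlusIn (F : Set FOForm) (A : Finset ℕ) (L : Set (FreeMonoid ℕ)) : Prop :=
  ∃ φ ∈ F, φ.IsSentence ∧ L = LangOfPlus A φ

/-! ### Concatenation of finite families and unions of valuations -/

/-- Concatenation of a finite family of words `u 0, u 1, …, u (k-1)` (in this order). -/
def GWord.concatFam {k : ℕ} (u : Fin k → GWord) : GWord :=
  ⟨Σₗ i : Fin k, (u i).carrier, inferInstance,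
    inferInstanceAs (Countable (Lex (Σ i : Fin k, (u i).carrier))),
    fun p => (u (ofLex p).1).label (ofLex p).2⟩

/-- The union of a family of valuations with (mutually disjoint) domains, as a valuation
on the concatenation. -/
def combineVal {k : ℕ} (u : Fin k → GWord) (α : ∀ i : Fin k, ℕ → Option (u i).carrier)
    (x : ℕ) : Option (GWord.concatFam u).carrier :=
  (List.finRange k).findSome? fun i => ((α i x).map fun p => toLex ⟨i, p⟩)

section Statement16Aux

/-- Coincidence lemma: satisfaction only depends on the values of the free variables. -/
lemma sat_congr (u : GWord) (φ : FOForm) :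
    ∀ α α' : ℕ → Option u.carrier, (∀ y ∈ φ.FV, α y = α' y) → (u.Sat α φ ↔ u.Sat α' φ) := by
  induction φ with
  | top => intro α α' h; exact Iff.rfl
  | bot => intro α α' h; exact Iff.rfl
  | empt => intro α α' h; exact Iff.rfl
  | eq z y =>
    intro α α' h
    simp only [GWord.Sat, h z (by simp [FOForm.FV]), h y (by simp [FOForm.FV])]
  | lab z a =>
    intro α α' h
    simp only [GWord.Sat, h z (by simp [FOForm.FV])]
  | lt z y =>
    intro α α' h
    simp only [GWord.Sat, h z (by simp [FOForm.FV]), h y (by simp [FOForm.FV])]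
  | le z y =>
    intro α α' h
    simp only [GWord.Sat, h z (by simp [FOForm.FV]), h y (by simp [FOForm.FV])]
  | suc z y =>
    intro α α' h
    simp only [GWord.Sat, h z (by simp [FOForm.FV]), h y (by simp [FOForm.FV])]
  | fmin z =>
    intro α α' h
    simp only [GWord.Sat, h z (by simp [FOForm.FV])]
  | fmax z =>
    intro α α' h
    simp only [GWord.Sat, h z (by simp [FOForm.FV])]
  | not φ ih =>
    intro α α' h
    exact not_congr (ih α α' h)
  | or φ ψ ihφ ihψ =>
    intro α α' h
    exact or_congr (ihφ _ _ fun y hy => h y (Finset.mem_union_left _ hy))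
      (ihψ _ _ fun y hy => h y (Finset.mem_union_right _ hy))
  | and φ ψ ihφ ihψ =>
    intro α α' h
    exact and_congr (ihφ _ _ fun y hy => h y (Finset.mem_union_left _ hy))
      (ihψ _ _ fun y hy => h y (Finset.mem_union_right _ hy))
  | ex z φ ih =>
    intro α α' h
    simp only [GWord.Sat]
    refine exists_congr fun p => ih _ _ fun y hy => ?_
    by_cases hz : y = z
    · simp [hz]
    · rw [if_neg hz, if_neg hz]
      exact h y (Finset.mem_erase.mpr ⟨hz, hy⟩)
  | all z φ ih =>
    intro α α' h
    simp only [GWord.Sat]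
    refine forall_congr' fun p => ih _ _ fun y hy => ?_
    by_cases hz : y = z
    · simp [hz]
    · rw [if_neg hz, if_neg hz]
      exact h y (Finset.mem_erase.mpr ⟨hz, hy⟩)

/-- Two valuations agreeing everywhere outside `x`. -/
def RelX {w : GWord} (x : ℕ) (a a' : ℕ → Option w.carrier) : Prop :=
  ∀ y, y ≠ x → a y = a' y

lemma relX_upd {w : GWord} {x : ℕ} {a a' : ℕ → Option w.carrier} (h : RelX x a a')
    (y : ℕ) (p : w.carrier) : RelX x (updVal a y p) (updVal a' y p) := by
  intro z hz
  unfold updVal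
  by_cases hzy : z = y <;> simp [hzy, h z hz]

lemma relX_upd2 {w : GWord} {x : ℕ} (a : ℕ → Option w.carrier) (p : w.carrier)
    (y : ℕ) (r : w.carrier) : RelX x (updVal a y r) (updVal (updVal a x p) y r) := by
  intro z hz
  unfold updVal
  by_cases hzy : z = y <;> simp [hzy, hz]

/-- Configurations that agree with a configuration of `Good` except possibly at the
variable `x`, where the simulated configuration may carry extra values. -/
def Half (x : ℕ) (Good : Set Config) (u v : GWord) : Set Config :=
  { C : Config | ∃ (G : Set FOForm) (a : ℕ → Option u.carrier) (b : ℕ → Option v.carrier)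
      (a' : ℕ → Option u.carrier) (b' : ℕ → Option v.carrier),
      C = ⟨G, u, v, a, b⟩ ∧ (⟨G, u, v, a', b'⟩ : Config) ∈ Good ∧
      RelX x a a' ∧ RelX x b b' ∧
      ((a x = a' x ∧ b x = b' x) ∨ (a x = none ∧ b x = none)) }

lemma diag1 {w1 w2 : GWord} {x : ℕ} {a a' : ℕ → Option w1.carrier}
    {b b' : ℕ → Option w2.carrier}
    (hd : (a x = a' x ∧ b x = b' x) ∨ (a x = none ∧ b x = none)) (y : ℕ)
    (r : w1.carrier) (t : w2.carrier) :
    (updVal a y r x = updVal a' y r x ∧ updVal b y t x = updVal b' y t x) ∨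
      (updVal a y r x = none ∧ updVal b y t x = none) := by
  by_cases hxy : x = y
  · left; subst hxy; simp [updVal]
  · simp only [updVal, if_neg hxy]; exact hd

lemma diag2 {w1 w2 : GWord} {x : ℕ} (a : ℕ → Option w1.carrier) (b : ℕ → Option w2.carrier)
    (ha : a x = none) (hb : b x = none) (p : w1.carrier) (s : w2.carrier) (y : ℕ)
    (r : w1.carrier) (t : w2.carrier) :
    (updVal a y r x = updVal (updVal a x p) y r x ∧
        updVal b y t x = updVal (updVal b x s) y t x) ∨
      (updVal a y r x = none ∧ updVal b y t x = none) := by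
  by_cases hxy : x = y
  · left; subst hxy; simp [updVal]
  · right; simp [updVal, hxy, ha, hb]

lemma half_move_mem {Good : Set Config} {G2 : Set FOForm} {w1 w2 : GWord}
    {a a' : ℕ → Option w1.carrier} {b b' : ℕ → Option w2.carrier} {x : ℕ}
    (hra : RelX x a a') (hrb : RelX x b b')
    (hd : (a x = a' x ∧ b x = b' x) ∨ (a x = none ∧ b x = none))
    (y : ℕ) (r : w1.carrier) (t : w2.carrier)
    (hD2 : (⟨G2, w1, w2, updVal a' y r, updVal b' y t⟩ : Config) ∈ Good) :
    (⟨G2, w1, w2, updVal a y r, updVal b y t⟩ : Config) ∈ Half x Good w1 w2 :=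
  ⟨G2, updVal a y r, updVal b y t, updVal a' y r, updVal b' y t, rfl, hD2,
    relX_upd hra y r, relX_upd hrb y t, diag1 hd y r t⟩

lemma pend_move_mem {Good : Set Config} {G2 : Set FOForm} {w1 w2 : GWord}
    {a : ℕ → Option w1.carrier} {b : ℕ → Option w2.carrier} {x : ℕ}
    (ha : a x = none) (hb : b x = none) (p : w1.carrier) (s : w2.carrier)
    (y : ℕ) (r : w1.carrier) (t : w2.carrier)
    (hD2 : (⟨G2, w1, w2, updVal (updVal a x p) y r, updVal (updVal b x s) y t⟩ : Config) ∈ Good) :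
    (⟨G2, w1, w2, updVal a y r, updVal b y t⟩ : Config) ∈ Half x Good w1 w2 :=
  ⟨G2, updVal a y r, updVal b y t, updVal (updVal a x p) y r, updVal (updVal b x s) y t,
    rfl, hD2, relX_upd2 a p y r, relX_upd2 b s y t, diag2 a b ha hb p s y r t⟩


lemma notwin_pos {F G : Set FOForm} {Good : Set Config} {u v : GWord}
    {α : ℕ → Option u.carrier} {β : ℕ → Option v.carrier} (hG : SafeInv Good)
    (hD0 : (⟨F, u, v, α, β⟩ : Config) ∈ Good) (x : ℕ) (hαx : α x = none)
    (hdrop : ∀ φ : FOForm, x ∉ φ.FV → φ ∈ G → φ ∈ F) :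
    ¬ SpoilerWinsNow ⟨G, u, v, α, β⟩ := by
  rintro ⟨φ, hφ, hlit, hdom, h1, h2⟩
  have hxFV : x ∉ φ.FV := fun h => by
    have h' : (α x).isSome = true := hdom x h
    rw [hαx] at h'; simp at h'
  exact (hG _ hD0).1 ⟨φ, hdrop φ hxFV hφ, hlit, hdom, h1, h2⟩

lemma notwin_neg {F G : Set FOForm} {Good : Set Config} {u v : GWord}
    {α : ℕ → Option u.carrier} {β : ℕ → Option v.carrier} (hF : IsFragment F)
    (hG : SafeInv Good)
    (hD0 : (⟨F, u, v, α, β⟩ : Config) ∈ Good) (x : ℕ) (hβx : β x = none)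
    (hdom2 : ∀ y, (β y).isSome → (α y).isSome)
    (hdropn : ∀ φ : FOForm, x ∉ φ.FV → φ ∈ G → FOForm.not φ ∈ F) :
    ¬ SpoilerWinsNow ⟨G, v, u, β, α⟩ := by
  rintro ⟨φ, hφ, hlit, hdom, h1, h2⟩
  have hxFV : x ∉ φ.FV := fun h => by
    have h' : (β x).isSome = true := hdom x h
    rw [hβx] at h'; simp at h'
  have hnφ : FOForm.not φ ∈ F := hdropn φ hxFV hφ
  have hdom' : ∀ y ∈ φ.FV, (α y).isSome := fun y hy => hdom2 y (hdom y hy)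
  rcases hlit with hat | ⟨ψ, hψ, rfl⟩
  · exact (hG _ hD0).1 ⟨.not φ, hnφ, Or.inr ⟨φ, hat, rfl⟩, hdom', h2, fun h => h h1⟩
  · exact (hG _ hD0).1 ⟨ψ, hF.negneg .hole ψ hnφ, Or.inl hψ, hdom', not_not.mp h2, h1⟩

lemma half_safe {Good : Set Config} (hG : SafeInv Good) (x : ℕ) (u v : GWord)
    (Good' : Set Config) (hs1 : Half x Good u v ⊆ Good') (hs2 : Half x Good v u ⊆ Good')
    {D : Config} (hD : D ∈ Half x Good u v) :
    (¬ SpoilerWinsNow D) ∧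
    (∀ z : ℕ, (reduct .qex z D.frag).Nonempty →
      ∀ q : D.w1.carrier, ∃ r : D.w2.carrier,
        (⟨reduct .qex z D.frag, D.w1, D.w2, updVal D.val1 z q, updVal D.val2 z r⟩ : Config) ∈ Good') ∧
    (∀ z : ℕ, (reduct .qall z D.frag).Nonempty →
      ∀ q : D.w2.carrier, ∃ r : D.w1.carrier,
        (⟨reduct .qall z D.frag, D.w1, D.w2, updVal D.val1 z r, updVal D.val2 z q⟩ : Config) ∈ Good') ∧
    (∀ z : ℕ, (reduct .qnex z D.frag).Nonempty →
      ∀ q : D.w2.carrier, ∃ r : D.w1.carrier,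
        (⟨reduct .qnex z D.frag, D.w2, D.w1, updVal D.val2 z q, updVal D.val1 z r⟩ : Config) ∈ Good') ∧
    (∀ z : ℕ, (reduct .qnall z D.frag).Nonempty →
      ∀ q : D.w1.carrier, ∃ r : D.w2.carrier,
        (⟨reduct .qnall z D.frag, D.w2, D.w1, updVal D.val2 z r, updVal D.val1 z q⟩ : Config) ∈ Good') := by
  obtain ⟨G, a, b, a', b', rfl, hDg, hra, hrb, hd⟩ := hD
  obtain ⟨hnw, hEX, hALL, hNEX, hNALL⟩ := hG _ hDg
  dsimp only at hnw hEX hALL hNEX hNALL ⊢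
  refine ⟨?_, ?_, ?_, ?_, ?_⟩
  · rintro ⟨φ, hφ, hlit, hdom, hs1', hs2'⟩
    have hag : (∀ y ∈ φ.FV, a y = a' y) ∧ (∀ y ∈ φ.FV, b y = b' y) := by
      by_cases hxf : x ∈ φ.FV
      · rcases hd with ⟨hd1, hd2⟩ | ⟨hd1, hd2⟩
        · constructor
          · intro y hy
            by_cases hyx : y = x
            · subst hyx; exact hd1
            · exact hra y hyx
          · intro y hy
            by_cases hyx : y = x
            · subst hyx; exact hd2
            · exact hrb y hyx
        · exfalso
          have h' : (a x).isSome = true := hdom x hxf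
          rw [hd1] at h'; simp at h'
      · constructor
        · intro y hy; exact hra y fun h => hxf (h ▸ hy)
        · intro y hy; exact hrb y fun h => hxf (h ▸ hy)
    exact hnw ⟨φ, hφ, hlit,
      fun y hy => show (a' y).isSome = true by rw [← hag.1 y hy]; exact hdom y hy,
      (sat_congr u φ a a' hag.1).mp hs1',
      fun hh => hs2' ((sat_congr v φ b b' hag.2).mpr hh)⟩
  · intro z hne q
    obtain ⟨r, hD2⟩ := hEX z hne q
    exact ⟨r, hs1 (half_move_mem hra hrb hd z q r hD2)⟩
  · intro z hne q
    obtain ⟨r, hD2⟩ := hALL z hne q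
    exact ⟨r, hs1 (half_move_mem hra hrb hd z r q hD2)⟩
  · intro z hne q
    obtain ⟨r, hD2⟩ := hNEX z hne q
    exact ⟨r, hs2 (half_move_mem hrb hra (hd.imp And.symm And.symm) z q r hD2)⟩
  · intro z hne q
    obtain ⟨r, hD2⟩ := hNALL z hne q
    exact ⟨r, hs2 (half_move_mem hrb hra (hd.imp And.symm And.symm) z r q hD2)⟩

end Statement16Aux

/-- Lemma: discarding quantifiers: if Duplicator wins
`(F, ⟨u, α⟩, ⟨v, β⟩)`, `x ∉ V` and `Qx⁻¹F ≠ ∅`, then Duplicator wins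
`(Qx⁻¹F, ⟨u, α⟩, ⟨v, β⟩)` for non-negated `Q` and `(Qx⁻¹F, ⟨v, β⟩, ⟨u, α⟩)` for
negated `Q`. -/
theorem statement_16 (F : Set FOForm) (hF : IsFragment F) (V : Finset ℕ)
    (u v : GWord) (α : ℕ → Option u.carrier) (β : ℕ → Option v.carrier)
    (hα : ValDom α V) (hβ : ValDom β V)
    (hwin : DuplicatorWins ⟨F, u, v, α, β⟩)
    (Q : Quant) (x : ℕ) (hx : x ∉ V) (hred : (reduct Q x F).Nonempty) :
    ((Q = Quant.qex ∨ Q = Quant.qall) →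
        DuplicatorWins ⟨reduct Q x F, u, v, α, β⟩) ∧
    ((Q = Quant.qnex ∨ Q = Quant.qnall) →
        DuplicatorWins ⟨reduct Q x F, v, u, β, α⟩) := by
  obtain ⟨Good, hC0g, hG⟩ := hwin
  have hαx : α x = none := Option.not_isSome_iff_eq_none.mp fun h => hx ((hα x).mp h)
  have hβx : β x = none := Option.not_isSome_iff_eq_none.mp fun h => hx ((hβ x).mp h)
  have hdom2 : ∀ y, (β y).isSome → (α y).isSome := fun y h => (hα y).mpr ((hβ y).mp h)
  obtain ⟨hnw0, hEX, hALL, hNEX, hNALL⟩ := hG _ hC0g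
  dsimp only at hnw0 hEX hALL hNEX hNALL
  cases Q with
  | qex =>
    refine ⟨fun _ => ?_, fun h => by rcases h with h | h <;> exact Quant.noConfusion h⟩
    refine ⟨{(⟨reduct Quant.qex x F, u, v, α, β⟩ : Config)} ∪ Half x Good u v ∪ Half x Good v u,
      Or.inl (Or.inl rfl), ?_⟩
    have sub1 : Half x Good u v ⊆
        {(⟨reduct Quant.qex x F, u, v, α, β⟩ : Config)} ∪ Half x Good u v ∪ Half x Good v u :=
      fun C hC => Or.inl (Or.inr hC)
    have sub2 : Half x Good v u ⊆
        {(⟨reduct Quant.qex x F, u, v, α, β⟩ : Config)} ∪ Half x Good u v ∪ Half x Good v u :=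
      fun C hC => Or.inr hC
    intro D hD
    rcases hD with (hD | hD) | hD
    · have hDeq : D = (⟨reduct Quant.qex x F, u, v, α, β⟩ : Config) := hD
      subst hDeq
      refine ⟨?_, ?_, ?_, ?_, ?_⟩
      · exact notwin_pos hG hC0g x hαx fun φ hxφ hφ => hF.ex_drop .hole φ x hφ hxφ
      · intro y hne q
        obtain ⟨s0, hD1⟩ := hEX x hred q
        obtain ⟨-, hEX1, -, -, -⟩ := hG _ hD1
        obtain ⟨r, hD2⟩ := hEX1 y hne q
        exact ⟨r, sub1 (pend_move_mem hαx hβx q s0 y q r hD2)⟩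
      · intro y hne q
        obtain ⟨φ, hφ⟩ := id hne
        have h1 : FOForm.ex x (.all y .top) ∈ F :=
          hF.top_mem (.exC x (.allC y .hole)) φ hφ
        have h2 : FOForm.all y .top ∈ F := hF.ex_drop .hole _ x h1 (by simp [FOForm.FV])
        obtain ⟨p, -⟩ := hALL y ⟨.top, h2⟩ q
        obtain ⟨s0, hD1⟩ := hEX x hred p
        obtain ⟨-, -, hALL1, -, -⟩ := hG _ hD1
        obtain ⟨r, hD2⟩ := hALL1 y hne q
        exact ⟨r, sub1 (pend_move_mem hαx hβx p s0 y r q hD2)⟩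
      · intro y hne q
        obtain ⟨φ, hφ⟩ := id hne
        have h1 : FOForm.ex x (.not (.ex y .top)) ∈ F :=
          hF.top_mem (.exC x (.notC (.exC y .hole))) φ hφ
        have h2 : FOForm.not (.ex y .top) ∈ F := hF.ex_drop .hole _ x h1 (by simp [FOForm.FV])
        obtain ⟨p, -⟩ := hNEX y ⟨.top, h2⟩ q
        obtain ⟨s0, hD1⟩ := hEX x hred p
        obtain ⟨-, -, -, hNEX1, -⟩ := hG _ hD1
        obtain ⟨r, hD2⟩ := hNEX1 y hne q
        exact ⟨r, sub2 (pend_move_mem hβx hαx s0 p y q r hD2)⟩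
      · intro y hne q
        obtain ⟨s0, hD1⟩ := hEX x hred q
        obtain ⟨-, -, -, -, hNALL1⟩ := hG _ hD1
        obtain ⟨r, hD2⟩ := hNALL1 y hne q
        exact ⟨r, sub2 (pend_move_mem hβx hαx s0 q y r q hD2)⟩
    · exact half_safe hG x u v _ sub1 sub2 hD
    · exact half_safe hG x v u _ sub2 sub1 hD
  | qall =>
    refine ⟨fun _ => ?_, fun h => by rcases h with h | h <;> exact Quant.noConfusion h⟩
    refine ⟨{(⟨reduct Quant.qall x F, u, v, α, β⟩ : Config)} ∪ Half x Good u v ∪ Half x Good v u,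
      Or.inl (Or.inl rfl), ?_⟩
    have sub1 : Half x Good u v ⊆
        {(⟨reduct Quant.qall x F, u, v, α, β⟩ : Config)} ∪ Half x Good u v ∪ Half x Good v u :=
      fun C hC => Or.inl (Or.inr hC)
    have sub2 : Half x Good v u ⊆
        {(⟨reduct Quant.qall x F, u, v, α, β⟩ : Config)} ∪ Half x Good u v ∪ Half x Good v u :=
      fun C hC => Or.inr hC
    intro D hD
    rcases hD with (hD | hD) | hD
    · have hDeq : D = (⟨reduct Quant.qall x F, u, v, α, β⟩ : Config) := hD
      subst hDeq
      refine ⟨?_, ?_, ?_, ?_, ?_⟩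
      · exact notwin_pos hG hC0g x hαx fun φ hxφ hφ => hF.all_drop .hole φ x hφ hxφ
      · intro y hne q
        obtain ⟨φ, hφ⟩ := id hne
        have h1 : FOForm.all x (.ex y .top) ∈ F :=
          hF.top_mem (.allC x (.exC y .hole)) φ hφ
        have h2 : FOForm.ex y .top ∈ F := hF.all_drop .hole _ x h1 (by simp [FOForm.FV])
        obtain ⟨p, -⟩ := hEX y ⟨.top, h2⟩ q
        obtain ⟨s0, hD1⟩ := hALL x hred p
        obtain ⟨-, hEX1, -, -, -⟩ := hG _ hD1
        obtain ⟨r, hD2⟩ := hEX1 y hne q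
        exact ⟨r, sub1 (pend_move_mem hαx hβx s0 p y q r hD2)⟩
      · intro y hne q
        obtain ⟨s0, hD1⟩ := hALL x hred q
        obtain ⟨-, -, hALL1, -, -⟩ := hG _ hD1
        obtain ⟨r, hD2⟩ := hALL1 y hne q
        exact ⟨r, sub1 (pend_move_mem hαx hβx s0 q y r q hD2)⟩
      · intro y hne q
        obtain ⟨s0, hD1⟩ := hALL x hred q
        obtain ⟨-, -, -, hNEX1, -⟩ := hG _ hD1
        obtain ⟨r, hD2⟩ := hNEX1 y hne q
        exact ⟨r, sub2 (pend_move_mem hβx hαx q s0 y q r hD2)⟩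
      · intro y hne q
        obtain ⟨φ, hφ⟩ := id hne
        have h1 : FOForm.all x (.not (.all y .top)) ∈ F :=
          hF.top_mem (.allC x (.notC (.allC y .hole))) φ hφ
        have h2 : FOForm.not (.all y .top) ∈ F := hF.all_drop .hole _ x h1 (by simp [FOForm.FV])
        obtain ⟨p, -⟩ := hNALL y ⟨.top, h2⟩ q
        obtain ⟨s0, hD1⟩ := hALL x hred p
        obtain ⟨-, -, -, -, hNALL1⟩ := hG _ hD1
        obtain ⟨r, hD2⟩ := hNALL1 y hne q
        exact ⟨r, sub2 (pend_move_mem hβx hαx p s0 y r q hD2)⟩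
    · exact half_safe hG x u v _ sub1 sub2 hD
    · exact half_safe hG x v u _ sub2 sub1 hD
  | qnex =>
    refine ⟨fun h => by rcases h with h | h <;> exact Quant.noConfusion h, fun _ => ?_⟩
    refine ⟨{(⟨reduct Quant.qnex x F, v, u, β, α⟩ : Config)} ∪ Half x Good u v ∪ Half x Good v u,
      Or.inl (Or.inl rfl), ?_⟩
    have sub1 : Half x Good u v ⊆
        {(⟨reduct Quant.qnex x F, v, u, β, α⟩ : Config)} ∪ Half x Good u v ∪ Half x Good v u :=
      fun C hC => Or.inl (Or.inr hC)
    have sub2 : Half x Good v u ⊆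
        {(⟨reduct Quant.qnex x F, v, u, β, α⟩ : Config)} ∪ Half x Good u v ∪ Half x Good v u :=
      fun C hC => Or.inr hC
    intro D hD
    rcases hD with (hD | hD) | hD
    · have hDeq : D = (⟨reduct Quant.qnex x F, v, u, β, α⟩ : Config) := hD
      subst hDeq
      refine ⟨?_, ?_, ?_, ?_, ?_⟩
      · exact notwin_neg hF hG hC0g x hβx hdom2
          fun φ hxφ hφ => hF.ex_drop (.notC .hole) φ x hφ hxφ
      · intro y hne q
        obtain ⟨s0, hD1⟩ := hNEX x hred q
        obtain ⟨-, hEX1, -, -, -⟩ := hG _ hD1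
        obtain ⟨r, hD2⟩ := hEX1 y hne q
        exact ⟨r, sub2 (pend_move_mem hβx hαx q s0 y q r hD2)⟩
      · intro y hne q
        obtain ⟨φ, hφ⟩ := id hne
        have h1 : FOForm.not (.ex x (.all y .top)) ∈ F :=
          hF.top_mem (.notC (.exC x (.allC y .hole))) φ hφ
        have h2 : FOForm.not (.all y .top) ∈ F :=
          hF.ex_drop (.notC .hole) _ x h1 (by simp [FOForm.FV])
        obtain ⟨p, -⟩ := hNALL y ⟨.top, h2⟩ q
        obtain ⟨s0, hD1⟩ := hNEX x hred p
        obtain ⟨-, -, hALL1, -, -⟩ := hG _ hD1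
        obtain ⟨r, hD2⟩ := hALL1 y hne q
        exact ⟨r, sub2 (pend_move_mem hβx hαx p s0 y r q hD2)⟩
      · intro y hne q
        obtain ⟨φ, hφ⟩ := id hne
        have h1 : FOForm.not (.ex x (.not (.ex y .top))) ∈ F :=
          hF.top_mem (.notC (.exC x (.notC (.exC y .hole)))) φ hφ
        have h2 : FOForm.not (.not (.ex y .top)) ∈ F :=
          hF.ex_drop (.notC .hole) _ x h1 (by simp [FOForm.FV])
        have h3 : FOForm.ex y .top ∈ F := hF.negneg .hole _ h2
        obtain ⟨p, -⟩ := hEX y ⟨.top, h3⟩ q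
        obtain ⟨s0, hD1⟩ := hNEX x hred p
        obtain ⟨-, -, -, hNEX1, -⟩ := hG _ hD1
        obtain ⟨r, hD2⟩ := hNEX1 y hne q
        exact ⟨r, sub1 (pend_move_mem hαx hβx s0 p y q r hD2)⟩
      · intro y hne q
        obtain ⟨s0, hD1⟩ := hNEX x hred q
        obtain ⟨-, -, -, -, hNALL1⟩ := hG _ hD1
        obtain ⟨r, hD2⟩ := hNALL1 y hne q
        exact ⟨r, sub1 (pend_move_mem hαx hβx s0 q y r q hD2)⟩
    · exact half_safe hG x u v _ sub1 sub2 hD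
    · exact half_safe hG x v u _ sub2 sub1 hD
  | qnall =>
    refine ⟨fun h => by rcases h with h | h <;> exact Quant.noConfusion h, fun _ => ?_⟩
    refine ⟨{(⟨reduct Quant.qnall x F, v, u, β, α⟩ : Config)} ∪ Half x Good u v ∪ Half x Good v u,
      Or.inl (Or.inl rfl), ?_⟩
    have sub1 : Half x Good u v ⊆
        {(⟨reduct Quant.qnall x F, v, u, β, α⟩ : Config)} ∪ Half x Good u v ∪ Half x Good v u :=
      fun C hC => Or.inl (Or.inr hC)
    have sub2 : Half x Good v u ⊆
        {(⟨reduct Quant.qnall x F, v, u, β, α⟩ : Config)} ∪ Half x Good u v ∪ Half x Good v u :=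
      fun C hC => Or.inr hC
    intro D hD
    rcases hD with (hD | hD) | hD
    · have hDeq : D = (⟨reduct Quant.qnall x F, v, u, β, α⟩ : Config) := hD
      subst hDeq
      refine ⟨?_, ?_, ?_, ?_, ?_⟩
      · exact notwin_neg hF hG hC0g x hβx hdom2
          fun φ hxφ hφ => hF.all_drop (.notC .hole) φ x hφ hxφ
      · intro y hne q
        obtain ⟨φ, hφ⟩ := id hne
        have h1 : FOForm.not (.all x (.ex y .top)) ∈ F :=
          hF.top_mem (.notC (.allC x (.exC y .hole))) φ hφ
        have h2 : FOForm.not (.ex y .top) ∈ F :=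
          hF.all_drop (.notC .hole) _ x h1 (by simp [FOForm.FV])
        obtain ⟨p, -⟩ := hNEX y ⟨.top, h2⟩ q
        obtain ⟨s0, hD1⟩ := hNALL x hred p
        obtain ⟨-, hEX1, -, -, -⟩ := hG _ hD1
        obtain ⟨r, hD2⟩ := hEX1 y hne q
        exact ⟨r, sub2 (pend_move_mem hβx hαx s0 p y q r hD2)⟩
      · intro y hne q
        obtain ⟨s0, hD1⟩ := hNALL x hred q
        obtain ⟨-, -, hALL1, -, -⟩ := hG _ hD1
        obtain ⟨r, hD2⟩ := hALL1 y hne q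
        exact ⟨r, sub2 (pend_move_mem hβx hαx s0 q y r q hD2)⟩
      · intro y hne q
        obtain ⟨s0, hD1⟩ := hNALL x hred q
        obtain ⟨-, -, -, hNEX1, -⟩ := hG _ hD1
        obtain ⟨r, hD2⟩ := hNEX1 y hne q
        exact ⟨r, sub1 (pend_move_mem hαx hβx q s0 y q r hD2)⟩
      · intro y hne q
        obtain ⟨φ, hφ⟩ := id hne
        have h1 : FOForm.not (.all x (.not (.all y .top))) ∈ F :=
          hF.top_mem (.notC (.allC x (.notC (.allC y .hole)))) φ hφ
        have h2 : FOForm.not (.not (.all y .top)) ∈ F :=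
          hF.all_drop (.notC .hole) _ x h1 (by simp [FOForm.FV])
        have h3 : FOForm.all y .top ∈ F := hF.negneg .hole _ h2
        obtain ⟨p, -⟩ := hALL y ⟨.top, h3⟩ q
        obtain ⟨s0, hD1⟩ := hNALL x hred p
        obtain ⟨-, -, -, -, hNALL1⟩ := hG _ hD1
        obtain ⟨r, hD2⟩ := hNALL1 y hne q
        exact ⟨r, sub1 (pend_move_mem hαx hβx p s0 y r q hD2)⟩
    · exact half_safe hG x u v _ sub1 sub2 hD
    · exact half_safe hG x v u _ sub2 sub1 hD

end EFGames
end

section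
/- Let R be a linear order of order type ρ = ω + ζ·η + ω*, e.g., the disjoint ordered sum of ℕ, then ℤ × ℚ ordered lexicographically with the ℚ-component dominant, then the negative integers. Then the following order isomorphisms hold: (1) R × R, ordered lexicographically with the second component dominant, is order-isomorphic to R (ρ·ρ = ρ); (2) the ordered sum R + R is order-isomorphic to R (ρ + ρ = ρ); (3) for every n ≥ 1, the ordered sum of n copies of R is order-isomorphic to R (n·ρ = ρ); (4) both R + 1 and 1 + R (adjoining a greatest, respectively least, element) are order-isomorphic to R. -/
set_option autoImplicit false

namespace EFGames

section
open Sum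
namespace RhoAux
variable {α β γ δ : Type*} [LinearOrder α] [LinearOrder β] [LinearOrder γ] [LinearOrder δ]

/-- distributivity of lex product over lex sum (first factor). -/
noncomputable def distrLex : ((α ⊕ₗ β) ×ₗ γ) ≃o ((α ×ₗ γ) ⊕ₗ (β ×ₗ γ)) := by
  refine StrictMono.orderIsoOfSurjective
    (fun x => match ofLex (ofLex x).1 with
      | inl a => toLex (inl (toLex (a, (ofLex x).2)))
      | inr b => toLex (inr (toLex (b, (ofLex x).2)))) ?_ ?_
  · intro x y h
    obtain ⟨⟨s, c⟩, rfl⟩ := toLex.surjective x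
    obtain ⟨⟨t, d⟩, rfl⟩ := toLex.surjective y
    obtain ⟨s, rfl⟩ := toLex.surjective s
    obtain ⟨t, rfl⟩ := toLex.surjective t
    rw [Prod.Lex.lt_iff] at h
    rcases s with a | b <;> rcases t with a' | b' <;>
      simp only [Sum.Lex.inl_lt_inl_iff, Sum.Lex.inr_lt_inr_iff, Sum.Lex.inl_lt_inr,
        Sum.Lex.not_inr_lt_inl, toLex_inj, Prod.Lex.lt_iff] at h ⊢ <;>
      simp_all [Prod.Lex.lt_iff]
  · intro y
    obtain ⟨p, rfl⟩ := toLex.surjective y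
    rcases p with p | p
    · obtain ⟨⟨a, c⟩, rfl⟩ := toLex.surjective p
      exact ⟨toLex (toLex (inl a), c), rfl⟩
    · obtain ⟨⟨b, c⟩, rfl⟩ := toLex.surjective p
      exact ⟨toLex (toLex (inr b), c), rfl⟩

/-- congruence for lex products. -/
noncomputable def prodLexCongr (e₁ : α ≃o γ) (e₂ : β ≃o δ) : (α ×ₗ β) ≃o (γ ×ₗ δ) := by
  refine StrictMono.orderIsoOfSurjective
    (fun x => toLex (e₁ (ofLex x).1, e₂ (ofLex x).2)) ?_ ?_
  · intro x y h
    obtain ⟨⟨a, b⟩, rfl⟩ := toLex.surjective x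
    obtain ⟨⟨a', b'⟩, rfl⟩ := toLex.surjective y
    rw [Prod.Lex.lt_iff] at h ⊢
    simpa using h
  · intro y
    obtain ⟨⟨c, d⟩, rfl⟩ := toLex.surjective y
    exact ⟨toLex (e₁.symm c, e₂.symm d), by simp⟩

/-- congruence for lex sums. -/
noncomputable def sumLexCongr' (e₁ : α ≃o γ) (e₂ : β ≃o δ) : (α ⊕ₗ β) ≃o (γ ⊕ₗ δ) := by
  refine StrictMono.orderIsoOfSurjective
    (fun x => match ofLex x with
      | inl a => toLex (inl (e₁ a))
      | inr b => toLex (inr (e₂ b))) ?_ ?_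
  · intro x y h
    obtain ⟨s, rfl⟩ := toLex.surjective x
    obtain ⟨t, rfl⟩ := toLex.surjective y
    rcases s with a | b <;> rcases t with a' | b' <;>
      simp only [Sum.Lex.inl_lt_inl_iff, Sum.Lex.inr_lt_inr_iff, Sum.Lex.inl_lt_inr,
        Sum.Lex.not_inr_lt_inl] at h ⊢ <;> simp_all
  · intro y
    obtain ⟨t, rfl⟩ := toLex.surjective y
    rcases t with c | d
    · exact ⟨toLex (inl (e₁.symm c)), by simp⟩
    · exact ⟨toLex (inr (e₂.symm d)), by simp⟩

/-- associativity of lex products. -/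
noncomputable def prodLexAssoc : ((α ×ₗ β) ×ₗ γ) ≃o (α ×ₗ (β ×ₗ γ)) := by
  refine StrictMono.orderIsoOfSurjective
    (fun x => toLex ((ofLex (ofLex x).1).1, toLex ((ofLex (ofLex x).1).2, (ofLex x).2))) ?_ ?_
  · intro x y h
    obtain ⟨⟨p, c⟩, rfl⟩ := toLex.surjective x
    obtain ⟨⟨q, d⟩, rfl⟩ := toLex.surjective y
    obtain ⟨⟨a, b⟩, rfl⟩ := toLex.surjective p
    obtain ⟨⟨a', b'⟩, rfl⟩ := toLex.surjective q
    rw [Prod.Lex.lt_iff] at h ⊢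
    rw [Prod.Lex.lt_iff] at h
    simp only [ofLex_toLex, toLex_inj, Prod.mk.injEq, Prod.Lex.lt_iff] at h ⊢
    tauto
  · intro y
    obtain ⟨⟨a, p⟩, rfl⟩ := toLex.surjective y
    obtain ⟨⟨b, c⟩, rfl⟩ := toLex.surjective p
    exact ⟨toLex (toLex (a, b), c), rfl⟩

/-- `1 × α ≃o α`. -/
noncomputable def punitProdLex : (PUnit ×ₗ α) ≃o α := by
  refine StrictMono.orderIsoOfSurjective (fun x => (ofLex x).2) ?_ ?_
  · intro x y h
    obtain ⟨⟨u, a⟩, rfl⟩ := toLex.surjective x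
    obtain ⟨⟨v, b⟩, rfl⟩ := toLex.surjective y
    rw [Prod.Lex.lt_iff] at h
    rcases h with h | ⟨-, h⟩
    · exact absurd h (by simp)
    · exact h
  · exact fun a => ⟨toLex (PUnit.unit, a), rfl⟩

/-- `ω·(α + β) ≃o α + ω·(β + α)` (rotation). -/
noncomputable def natRot : (ℕ ×ₗ (α ⊕ₗ β)) ≃o (α ⊕ₗ (ℕ ×ₗ (β ⊕ₗ α))) := by
  refine StrictMono.orderIsoOfSurjective
    (fun x => match ofLex (ofLex x).2, (ofLex x).1 with
      | inl a, 0 => toLex (inl a)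
      | inl a, (n+1) => toLex (inr (toLex (n, toLex (inr a))))
      | inr b, n => toLex (inr (toLex (n, toLex (inl b))))) ?_ ?_
  · intro x y h
    obtain ⟨⟨n, s⟩, rfl⟩ := toLex.surjective x
    obtain ⟨⟨m, t⟩, rfl⟩ := toLex.surjective y
    obtain ⟨s, rfl⟩ := toLex.surjective s
    obtain ⟨t, rfl⟩ := toLex.surjective t
    rw [Prod.Lex.lt_iff] at h
    rcases s with a | b <;> rcases t with a' | b' <;> rcases n with _ | n <;> rcases m with _ | m <;>
      simp_all only [ofLex_toLex, Sum.Lex.inl_lt_inl_iff, Sum.Lex.inr_lt_inr_iff,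
        Sum.Lex.inl_lt_inr, Sum.Lex.not_inr_lt_inl, toLex_inj, Prod.Lex.lt_iff,
        Prod.mk.injEq] <;>
      simp_all [Prod.Lex.lt_iff] <;> omega
  · intro y
    obtain ⟨t, rfl⟩ := toLex.surjective y
    rcases t with a | p
    · exact ⟨toLex (0, toLex (inl a)), rfl⟩
    · obtain ⟨⟨n, s⟩, rfl⟩ := toLex.surjective p
      obtain ⟨s, rfl⟩ := toLex.surjective s
      rcases s with b | a
      · exact ⟨toLex (n, toLex (inr b)), rfl⟩
      · exact ⟨toLex (n+1, toLex (inl a)), rfl⟩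

/-- `ζ·(α + β) ≃o ζ·(β + α)` (rotation). -/
noncomputable def intRot : (ℤ ×ₗ (α ⊕ₗ β)) ≃o (ℤ ×ₗ (β ⊕ₗ α)) := by
  refine StrictMono.orderIsoOfSurjective
    (fun x => match ofLex (ofLex x).2 with
      | inl a => toLex ((ofLex x).1, toLex (inr a))
      | inr b => toLex ((ofLex x).1 + 1, toLex (inl b))) ?_ ?_
  · intro x y h
    obtain ⟨⟨n, s⟩, rfl⟩ := toLex.surjective x
    obtain ⟨⟨m, t⟩, rfl⟩ := toLex.surjective y
    obtain ⟨s, rfl⟩ := toLex.surjective s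
    obtain ⟨t, rfl⟩ := toLex.surjective t
    rw [Prod.Lex.lt_iff] at h
    rcases s with a | b <;> rcases t with a' | b' <;>
      simp_all only [ofLex_toLex, Sum.Lex.inl_lt_inl_iff, Sum.Lex.inr_lt_inr_iff,
        Sum.Lex.inl_lt_inr, Sum.Lex.not_inr_lt_inl, toLex_inj, Prod.Lex.lt_iff,
        Prod.mk.injEq] <;>
      simp_all [Prod.Lex.lt_iff] <;> omega
  · intro y
    obtain ⟨⟨n, t⟩, rfl⟩ := toLex.surjective y
    obtain ⟨t, rfl⟩ := toLex.surjective t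
    rcases t with b | a
    · exact ⟨toLex (n - 1, toLex (inr b)), by simp⟩
    · exact ⟨toLex (n, toLex (inl a)), rfl⟩

/-- `ω*·(α + β) ≃o ω*·(β + α) + β` (rotation). -/
noncomputable def odRot : (ℕᵒᵈ ×ₗ (α ⊕ₗ β)) ≃o ((ℕᵒᵈ ×ₗ (β ⊕ₗ α)) ⊕ₗ β) := by
  refine StrictMono.orderIsoOfSurjective
    (fun x => match ofLex (ofLex x).2, OrderDual.ofDual (ofLex x).1 with
      | inl a, n => toLex (inl (toLex (OrderDual.toDual n, toLex (inr a))))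
      | inr b, 0 => toLex (inr b)
      | inr b, (n+1) => toLex (inl (toLex (OrderDual.toDual n, toLex (inl b))))) ?_ ?_
  · intro x y h
    obtain ⟨⟨n, s⟩, rfl⟩ := toLex.surjective x
    obtain ⟨⟨m, t⟩, rfl⟩ := toLex.surjective y
    obtain ⟨n, rfl⟩ := OrderDual.toDual.surjective n
    obtain ⟨m, rfl⟩ := OrderDual.toDual.surjective m
    obtain ⟨s, rfl⟩ := toLex.surjective s
    obtain ⟨t, rfl⟩ := toLex.surjective t
    rw [Prod.Lex.lt_iff] at h
    rcases s with a | b <;> rcases t with a' | b' <;> rcases n with _ | n <;> rcases m with _ | m <;>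
      simp_all only [ofLex_toLex, OrderDual.ofDual_toDual, Sum.Lex.inl_lt_inl_iff,
        Sum.Lex.inr_lt_inr_iff, Sum.Lex.inl_lt_inr, Sum.Lex.not_inr_lt_inl, toLex_inj,
        Prod.Lex.lt_iff, Prod.mk.injEq, OrderDual.toDual_lt_toDual, OrderDual.toDual_inj] <;>
      simp_all [Prod.Lex.lt_iff] <;> omega
  · intro y
    obtain ⟨t, rfl⟩ := toLex.surjective y
    rcases t with p | b
    · obtain ⟨⟨n, s⟩, rfl⟩ := toLex.surjective p
      obtain ⟨n, rfl⟩ := OrderDual.toDual.surjective n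
      obtain ⟨s, rfl⟩ := toLex.surjective s
      rcases s with b | a
      · exact ⟨toLex (OrderDual.toDual (n+1), toLex (inr b)), rfl⟩
      · exact ⟨toLex (OrderDual.toDual n, toLex (inl a)), rfl⟩
    · exact ⟨toLex (OrderDual.toDual 0, toLex (inr b)), rfl⟩

/-- `ω* + ω ≃o ζ`. -/
noncomputable def zIso : (ℕᵒᵈ ⊕ₗ ℕ) ≃o ℤ := by
  refine StrictMono.orderIsoOfSurjective
    (fun x => match ofLex x with
      | inl n => (-1 : ℤ) - (OrderDual.ofDual n : ℕ)
      | inr n => (n : ℤ)) ?_ ?_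
  · intro x y h
    obtain ⟨s, rfl⟩ := toLex.surjective x
    obtain ⟨t, rfl⟩ := toLex.surjective y
    rcases s with n | n <;> rcases t with m | m
    all_goals first
      | (guard_hyp n :ₛ ℕᵒᵈ; obtain ⟨n, rfl⟩ := OrderDual.toDual.surjective n)
      | skip
    all_goals first
      | (guard_hyp m :ₛ ℕᵒᵈ; obtain ⟨m, rfl⟩ := OrderDual.toDual.surjective m)
      | skip
    all_goals
      simp_all only [ofLex_toLex, OrderDual.ofDual_toDual, Sum.Lex.inl_lt_inl_iff,
        Sum.Lex.inr_lt_inr_iff, Sum.Lex.inl_lt_inr, Sum.Lex.not_inr_lt_inl,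
        OrderDual.toDual_lt_toDual]
    all_goals omega
  · intro z
    rcases le_or_gt 0 z with hz | hz
    · exact ⟨toLex (inr z.toNat), by simp [hz]⟩
    · refine ⟨toLex (inl (OrderDual.toDual (-(z+1)).toNat)), ?_⟩
      show (-1 : ℤ) - (((-(z+1)).toNat : ℕ) : ℤ) = z
      omega

/-- `ω* + 1 ≃o ω*`. -/
noncomputable def odSucc : (ℕᵒᵈ ⊕ₗ PUnit) ≃o ℕᵒᵈ := by
  refine StrictMono.orderIsoOfSurjective
    (fun x => match ofLex x with
      | inl n => OrderDual.toDual ((OrderDual.ofDual n : ℕ) + 1)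
      | inr _ => OrderDual.toDual 0) ?_ ?_
  · intro x y h
    obtain ⟨s, rfl⟩ := toLex.surjective x
    obtain ⟨t, rfl⟩ := toLex.surjective y
    rcases s with n | n <;> rcases t with m | m
    all_goals first
      | (guard_hyp n :ₛ ℕᵒᵈ; obtain ⟨n, rfl⟩ := OrderDual.toDual.surjective n)
      | skip
    all_goals first
      | (guard_hyp m :ₛ ℕᵒᵈ; obtain ⟨m, rfl⟩ := OrderDual.toDual.surjective m)
      | skip
    all_goals
      simp_all only [ofLex_toLex, OrderDual.ofDual_toDual, Sum.Lex.inl_lt_inl_iff,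
        Sum.Lex.inr_lt_inr_iff, Sum.Lex.inl_lt_inr, Sum.Lex.not_inr_lt_inl,
        OrderDual.toDual_lt_toDual]
    all_goals first
      | omega
      | (exact absurd h (by simp))
      | (exact Nat.lt_irrefl _ (by omega))
      | simp_all
  · intro n
    obtain ⟨n, rfl⟩ := OrderDual.toDual.surjective n
    rcases n with _ | n
    · exact ⟨toLex (inr PUnit.unit), rfl⟩
    · exact ⟨toLex (inl (OrderDual.toDual n)), rfl⟩

/-- `1 + ω ≃o ω`. -/
noncomputable def natPred : (PUnit ⊕ₗ ℕ) ≃o ℕ := by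
  refine StrictMono.orderIsoOfSurjective
    (fun x => match ofLex x with
      | inl _ => 0
      | inr n => n + 1) ?_ ?_
  · intro x y h
    obtain ⟨s, rfl⟩ := toLex.surjective x
    obtain ⟨t, rfl⟩ := toLex.surjective y
    rcases s with n | n <;> rcases t with m | m <;>
      simp_all only [ofLex_toLex, Sum.Lex.inl_lt_inl_iff, Sum.Lex.inr_lt_inr_iff,
        Sum.Lex.inl_lt_inr, Sum.Lex.not_inr_lt_inl] <;>
      first
        | omega
        | (exact absurd h (by simp))
  · intro n
    rcases n with _ | n
    · exact ⟨toLex (inl PUnit.unit), rfl⟩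
    · exact ⟨toLex (inr n), rfl⟩

/-- `1 + Fin n ≃o Fin (n+1)`. -/
noncomputable def finSucc (n : ℕ) : (PUnit ⊕ₗ Fin n) ≃o Fin (n + 1) := by
  refine StrictMono.orderIsoOfSurjective
    (fun x => match ofLex x with
      | inl _ => 0
      | inr i => i.succ) ?_ ?_
  · intro x y h
    obtain ⟨s, rfl⟩ := toLex.surjective x
    obtain ⟨t, rfl⟩ := toLex.surjective y
    rcases s with i | i <;> rcases t with j | j <;>
      simp_all only [ofLex_toLex, Sum.Lex.inl_lt_inl_iff, Sum.Lex.inr_lt_inr_iff,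
        Sum.Lex.inl_lt_inr, Sum.Lex.not_inr_lt_inl] <;>
      first
        | (exact Fin.succ_lt_succ_iff.mpr h)
        | (exact Fin.succ_pos j)
        | (exact absurd h (by simp))
  · intro i
    rcases Fin.eq_zero_or_eq_succ i with rfl | ⟨j, rfl⟩
    · exact ⟨toLex (inl PUnit.unit), rfl⟩
    · exact ⟨toLex (inr j), rfl⟩

theorem prodLexDense_noMin [DenselyOrdered β] [NoMinOrder β] : DenselyOrdered (α ×ₗ β) := by
  constructor
  intro x y h
  obtain ⟨⟨a, b⟩, rfl⟩ := toLex.surjective x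
  obtain ⟨⟨a', b'⟩, rfl⟩ := toLex.surjective y
  rw [Prod.Lex.lt_iff] at h
  rcases h with h | ⟨rfl, h⟩
  · obtain ⟨c, hc⟩ := exists_lt b'
    exact ⟨toLex (a', c), by rw [Prod.Lex.lt_iff]; exact Or.inl h,
      by rw [Prod.Lex.lt_iff]; exact Or.inr ⟨rfl, hc⟩⟩
  · obtain ⟨c, hc1, hc2⟩ := exists_between h
    exact ⟨toLex (a, c), by rw [Prod.Lex.lt_iff]; exact Or.inr ⟨rfl, hc1⟩,
      by rw [Prod.Lex.lt_iff]; exact Or.inr ⟨rfl, hc2⟩⟩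

theorem prodLexDense_noMax [DenselyOrdered β] [NoMaxOrder β] : DenselyOrdered (α ×ₗ β) := by
  constructor
  intro x y h
  obtain ⟨⟨a, b⟩, rfl⟩ := toLex.surjective x
  obtain ⟨⟨a', b'⟩, rfl⟩ := toLex.surjective y
  rw [Prod.Lex.lt_iff] at h
  rcases h with h | ⟨rfl, h⟩
  · obtain ⟨c, hc⟩ := exists_gt b
    exact ⟨toLex (a, c), by rw [Prod.Lex.lt_iff]; exact Or.inr ⟨rfl, hc⟩,
      by rw [Prod.Lex.lt_iff]; exact Or.inl h⟩
  · obtain ⟨c, hc1, hc2⟩ := exists_between h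
    exact ⟨toLex (a, c), by rw [Prod.Lex.lt_iff]; exact Or.inr ⟨rfl, hc1⟩,
      by rw [Prod.Lex.lt_iff]; exact Or.inr ⟨rfl, hc2⟩⟩


section Assembly
open OrderIso

local notation "Q" => (ℚ ×ₗ ℤ)
local notation "D" => (ℕᵒᵈ)
local notation "R" => ((ℕ ⊕ₗ (ℚ ×ₗ ℤ)) ⊕ₗ ℕᵒᵈ)

noncomputable def isoQ (X : Type) [LinearOrder X] [Countable X] [DenselyOrdered X]
    [NoMinOrder X] [NoMaxOrder X] [Nonempty X] : X ≃o ℚ :=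
  Classical.choice (Order.iso_of_countable_dense X ℚ)

instance : DenselyOrdered PUnit := ⟨fun a b h => absurd h (by simp)⟩

instance : Nonempty (ℚ ⊕ₗ PUnit) := ⟨toLex (inl 0)⟩
instance : Nonempty (PUnit ⊕ₗ ℚ) := ⟨toLex (inr 0)⟩

/-- `ω·(η+1) ≃o η`. -/
noncomputable def isoQ1 : (ℕ ×ₗ (ℚ ⊕ₗ PUnit)) ≃o ℚ := by
  haveI : DenselyOrdered (ℕ ×ₗ (ℚ ⊕ₗ PUnit.{1})) := prodLexDense_noMin
  haveI : Nonempty (ℕ ×ₗ (ℚ ⊕ₗ PUnit)) := ⟨toLex (0, toLex (inl 0))⟩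
  exact isoQ _

/-- `ζ·(η+1) ≃o η`. -/
noncomputable def isoQ2 : (ℤ ×ₗ (ℚ ⊕ₗ PUnit)) ≃o ℚ := by
  haveI : DenselyOrdered (ℤ ×ₗ (ℚ ⊕ₗ PUnit.{1})) := prodLexDense_noMin
  haveI : Nonempty (ℤ ×ₗ (ℚ ⊕ₗ PUnit)) := ⟨toLex (0, toLex (inl 0))⟩
  exact isoQ _

/-- `ω*·(1+η) ≃o η`. -/
noncomputable def isoQ3 : (ℕᵒᵈ ×ₗ (PUnit ⊕ₗ ℚ)) ≃o ℚ := by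
  haveI : DenselyOrdered (ℕᵒᵈ ×ₗ (PUnit ⊕ₗ ℚ)) := prodLexDense_noMax
  haveI : Nonempty (ℕᵒᵈ ×ₗ (PUnit ⊕ₗ ℚ)) := ⟨toLex (OrderDual.toDual 0, toLex (inr 0))⟩
  exact isoQ _

/-- `η·η ≃o η`. -/
noncomputable def isoQ4 : (ℚ ×ₗ ℚ) ≃o ℚ := by
  haveI : DenselyOrdered (ℚ ×ₗ ℚ) := prodLexDense_noMin
  haveI : Nonempty (ℚ ×ₗ ℚ) := ⟨toLex (0, 0)⟩
  exact isoQ _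

/-- `η+1+η ≃o η`. -/
noncomputable def isoQ5 : ((ℚ ⊕ₗ PUnit) ⊕ₗ ℚ) ≃o ℚ := by
  exact isoQ _

/-- `η+η+η ≃o η`. -/
noncomputable def isoQ6 : ((ℚ ⊕ₗ ℚ) ⊕ₗ ℚ) ≃o ℚ := by
  haveI : Nonempty (ℚ ⊕ₗ ℚ) := ⟨toLex (inl 0)⟩
  exact isoQ _

/-- `η+(1+η) ≃o η`. -/
noncomputable def isoQ7 : (ℚ ⊕ₗ (PUnit ⊕ₗ ℚ)) ≃o ℚ := by
  exact isoQ _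

/-- `(η+1)·ζ  split: Q + ζ`. -/
noncomputable def qzSplit : ((ℚ ⊕ₗ PUnit) ×ₗ ℤ) ≃o ((ℚ ×ₗ ℤ) ⊕ₗ ℤ) :=
  distrLex.trans (sumLexCongr' (OrderIso.refl _) punitProdLex)

/-- `(1+η)·ζ split: ζ + Q`. -/
noncomputable def zqSplit : ((PUnit ⊕ₗ ℚ) ×ₗ ℤ) ≃o (ℤ ⊕ₗ (ℚ ×ₗ ℤ)) :=
  distrLex.trans (sumLexCongr' punitProdLex (OrderIso.refl _))

/-- `ω`-power of `Q + ζ` is `Q`. -/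
noncomputable def aux1 : (ℕ ×ₗ ((ℚ ×ₗ ℤ) ⊕ₗ ℤ)) ≃o Q :=
  (prodLexCongr (OrderIso.refl ℕ) qzSplit.symm).trans <|
    prodLexAssoc.symm.trans (prodLexCongr isoQ1 (OrderIso.refl ℤ))

/-- `ζ`-power of `Q + ζ` is `Q`. -/
noncomputable def aux2 : (ℤ ×ₗ ((ℚ ×ₗ ℤ) ⊕ₗ ℤ)) ≃o Q :=
  (prodLexCongr (OrderIso.refl ℤ) qzSplit.symm).trans <|
    prodLexAssoc.symm.trans (prodLexCongr isoQ2 (OrderIso.refl ℤ))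

/-- `ω*`-power of `ζ + Q` is `Q`. -/
noncomputable def aux3 : (ℕᵒᵈ ×ₗ (ℤ ⊕ₗ (ℚ ×ₗ ℤ))) ≃o Q :=
  (prodLexCongr (OrderIso.refl ℕᵒᵈ) zqSplit.symm).trans <|
    prodLexAssoc.symm.trans (prodLexCongr isoQ3 (OrderIso.refl ℤ))

/-- `(Q + ω*) + ω ≃o Q + ζ`. -/
noncomputable def step3 : (((ℚ ×ₗ ℤ) ⊕ₗ ℕᵒᵈ) ⊕ₗ ℕ) ≃o ((ℚ ×ₗ ℤ) ⊕ₗ ℤ) :=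
  (OrderIso.sumLexAssoc _ _ _).trans (sumLexCongr' (OrderIso.refl _) zIso)

/-- `Q + Q + Q ≃o Q`. -/
noncomputable def qqq : (((ℚ ×ₗ ℤ) ⊕ₗ (ℚ ×ₗ ℤ)) ⊕ₗ (ℚ ×ₗ ℤ)) ≃o Q :=
  ((sumLexCongr' distrLex (OrderIso.refl _)).symm.trans distrLex.symm).trans
    (prodLexCongr isoQ6 (OrderIso.refl ℤ))

/-- `Q + ζ + Q ≃o Q`. -/
noncomputable def qzq : ((ℚ ×ₗ ℤ) ⊕ₗ (ℤ ⊕ₗ (ℚ ×ₗ ℤ))) ≃o Q :=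
  ((sumLexCongr' (OrderIso.refl _) zqSplit).symm.trans distrLex.symm).trans
    (prodLexCongr isoQ7 (OrderIso.refl ℤ))

noncomputable def rAssoc : R ≃o (ℕ ⊕ₗ ((ℚ ×ₗ ℤ) ⊕ₗ ℕᵒᵈ)) := OrderIso.sumLexAssoc _ _ _

/-- `ρ·ω ≃o ω + ζη`. -/
noncomputable def pieceA : (ℕ ×ₗ R) ≃o (ℕ ⊕ₗ (ℚ ×ₗ ℤ)) :=
  ((prodLexCongr (OrderIso.refl ℕ) rAssoc).trans natRot).trans <|
    sumLexCongr' (OrderIso.refl ℕ)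
      ((prodLexCongr (OrderIso.refl ℕ) step3).trans aux1)

/-- `ρ·ζ ≃o ζη`. -/
noncomputable def intR : (ℤ ×ₗ R) ≃o Q :=
  (((prodLexCongr (OrderIso.refl ℤ) rAssoc).trans intRot).trans
    (prodLexCongr (OrderIso.refl ℤ) step3)).trans aux2

/-- `ρ·(ζη) ≃o ζη`. -/
noncomputable def pieceB : ((ℚ ×ₗ ℤ) ×ₗ R) ≃o Q :=
  (prodLexAssoc.trans (prodLexCongr (OrderIso.refl ℚ) intR)).trans <|
    prodLexAssoc.symm.trans (prodLexCongr isoQ4 (OrderIso.refl ℤ))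

/-- `ρ·ω* ≃o ζη + ω*`. -/
noncomputable def pieceC : (ℕᵒᵈ ×ₗ R) ≃o ((ℚ ×ₗ ℤ) ⊕ₗ ℕᵒᵈ) :=
  odRot.trans <| sumLexCongr'
    ((prodLexCongr (OrderIso.refl ℕᵒᵈ)
      (((OrderIso.sumLexAssoc _ _ _).symm).trans (sumLexCongr' zIso (OrderIso.refl _)))).trans aux3)
    (OrderIso.refl ℕᵒᵈ)

/-- `ρ·ρ ≃o ρ`. -/
noncomputable def main1 : (R ×ₗ R) ≃o R :=
  (distrLex.trans (sumLexCongr' (distrLex.trans (sumLexCongr' pieceA pieceB)) pieceC)).trans <|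
    -- ((ℕ ⊕ Q) ⊕ Q) ⊕ (Q ⊕ D) ≃o R
    (sumLexCongr' (OrderIso.sumLexAssoc ℕ _ _) (OrderIso.refl _)).trans <|
      (OrderIso.sumLexAssoc _ _ _).trans <|
        (sumLexCongr' (OrderIso.refl ℕ)
          (((OrderIso.sumLexAssoc _ _ _).symm).trans (sumLexCongr' qqq (OrderIso.refl D)))).trans
          rAssoc.symm

/-- `ρ + ρ ≃o ρ`. -/
noncomputable def main2 : (R ⊕ₗ R) ≃o R :=
  ((sumLexCongr' rAssoc rAssoc).trans (OrderIso.sumLexAssoc _ _ _)).trans <|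
    (sumLexCongr' (OrderIso.refl ℕ)
      (((OrderIso.sumLexAssoc _ _ _).trans
        (sumLexCongr' (OrderIso.refl Q)
          (((OrderIso.sumLexAssoc _ _ _).symm).trans
            ((sumLexCongr' zIso (OrderIso.refl _)).trans
              ((OrderIso.sumLexAssoc _ _ _).symm))))).trans
        (((OrderIso.sumLexAssoc _ _ _).symm).trans (sumLexCongr' qzq (OrderIso.refl D))))).trans
      rAssoc.symm

noncomputable def fin1Punit : Fin 1 ≃o PUnit.{1} where
  toEquiv := Equiv.equivPUnit (Fin 1)
  map_rel_iff' := by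
    intro a b
    simp [Subsingleton.elim a b]

noncomputable def main3 : ∀ n : ℕ, 1 ≤ n → Nonempty ((Fin n ×ₗ R) ≃o R) := by
  intro n hn
  induction n with
  | zero => omega
  | succ n ih =>
    rcases Nat.eq_zero_or_pos n with rfl | hn'
    · exact ⟨(prodLexCongr fin1Punit (OrderIso.refl _)).trans punitProdLex⟩
    · obtain ⟨e⟩ := ih hn'
      exact ⟨((prodLexCongr (finSucc.{1} n).symm (OrderIso.refl _)).trans
        (distrLex.trans (sumLexCongr' punitProdLex e))).trans main2⟩

/-- `ρ + 1 ≃o ρ`. -/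
noncomputable def main4 : (R ⊕ₗ PUnit) ≃o R :=
  (OrderIso.sumLexAssoc _ _ _).trans (sumLexCongr' (OrderIso.refl _) odSucc)

/-- `1 + ρ ≃o ρ`. -/
noncomputable def main5 : (PUnit ⊕ₗ R) ≃o R :=
  ((OrderIso.sumLexAssoc _ _ _).symm).trans <|
    sumLexCongr' (((OrderIso.sumLexAssoc _ _ _).symm).trans
      (sumLexCongr' natPred (OrderIso.refl Q))) (OrderIso.refl D)

end Assembly
end RhoAux

end

/-- identities of the order type `ρ`: `ρ·ρ = ρ`, `ρ + ρ = ρ`,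
`n·ρ = ρ` for `n ≥ 1`, and `ρ + 1 = 1 + ρ = ρ`, stated as order isomorphisms of the
corresponding lexicographic products and ordered sums with a linear order `Rho` of
order type `ρ` (since both factors of the product equal `Rho`, the lexicographic
product represents `ρ·ρ`). -/
theorem statement_19 :
    Nonempty ((Rho ×ₗ Rho) ≃o Rho) ∧
    Nonempty ((Rho ⊕ₗ Rho) ≃o Rho) ∧
    (∀ n : ℕ, 1 ≤ n → Nonempty ((Fin n ×ₗ Rho) ≃o Rho)) ∧
    Nonempty ((Rho ⊕ₗ PUnit) ≃o Rho) ∧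
    Nonempty ((PUnit ⊕ₗ Rho) ≃o Rho) := by
  exact ⟨⟨RhoAux.main1⟩, ⟨RhoAux.main2⟩, RhoAux.main3, ⟨RhoAux.main4⟩, ⟨RhoAux.main5⟩⟩

end EFGames
end
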